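/- arXiv:2210.15243 — 3 statements merged into one kernel-verified Lean document; each statement's English description precedes it below -/
import Mathlib

section
/- If the constraint gradients {∇u_j(x*)} ∪ {∇v_l(x*) : l active} are linearly independent (LICQ), then the normal cone to the set D = {x : u_j(x) = 0 ∀j, v_l(x) ≤ 0 ∀l} at x* is exactly the set of linear combinations Σ_j μ_j ∇u_j(x*) + Σ_{l active} λ_l ∇v_l(x*) with λ_l ≥ 0. -/
/-- The regular (Fréchet) normal cone to `D` at `x` (under LICQ it coincides with
the limiting normal cone), in ε-δ form. -/
def frechetNormalCone {V : Type*} [NormedAddCommGroup V] [InnerProductSpace ℝ V]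
    (D : Set V) (x : V) : Set V :=
  {v | ∀ ε > (0 : ℝ), ∃ δ > (0 : ℝ), ∀ y ∈ D, ‖y - x‖ < δ →
    (inner ℝ v (y - x) : ℝ) ≤ ε * ‖y - x‖}

open Set Filter Metric Topology

set_option maxHeartbeats 1000000

lemma exists_inner_eq_of_linearIndependent {ι : Type*} [Fintype ι] [DecidableEq ι]
    {E : Type*} [NormedAddCommGroup E] [InnerProductSpace ℝ E] [FiniteDimensional ℝ E]
    {g : ι → E} (hg : LinearIndependent ℝ g) (t : ι → ℝ) :
    ∃ d : E, ∀ i, (inner ℝ (g i) d : ℝ) = t i := by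
  classical
  let T : E →ₗ[ℝ] EuclideanSpace ℝ ι :=
    { toFun := fun d => WithLp.toLp 2 (fun i => (inner ℝ (g i) d : ℝ))
      map_add' := by intro a b; ext i; simp [inner_add_right]
      map_smul' := by intro m a; ext i; simp [inner_smul_right] }
  have hrange : LinearMap.range T = ⊤ := by
    rw [← Submodule.orthogonal_eq_bot_iff]
    rw [Submodule.eq_bot_iff]
    intro c hc
    rw [Submodule.mem_orthogonal] at hc
    have key : ∀ d : E, (inner ℝ (∑ i, c i • g i) d : ℝ) = 0 := by
      intro d
      have := hc (T d) (LinearMap.mem_range_self T d)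
      rw [PiLp.inner_apply] at this
      simp only [RCLike.inner_apply, conj_trivial] at this
      rw [sum_inner]
      simp only [inner_smul_left, conj_trivial]
      rw [← this]
      congr 1
    have hzero : (∑ i, c i • g i) = 0 := by
      have := key (∑ i, c i • g i)
      rwa [inner_self_eq_zero] at this
    have := Fintype.linearIndependent_iff.mp hg c hzero
    ext i; simpa using this i
  have : Function.Surjective T := LinearMap.range_eq_top.mp hrange
  obtain ⟨d, hd⟩ := this (WithLp.toLp 2 t)
  exact ⟨d, fun i => congrArg (fun z : EuclideanSpace ℝ ι => z i) hd⟩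

lemma inner_nonpos_of_frechetNormalCone
    {E : Type*} [NormedAddCommGroup E] [InnerProductSpace ℝ E] [CompleteSpace E]
    {ι : Type*} [Fintype ι]
    {F : E → EuclideanSpace ℝ ι} {f' : E →L[ℝ] EuclideanSpace ℝ ι} {x : E}
    (hF : HasStrictFDerivAt F f' x) (hFx : F x = 0)
    (hsurj : f'.range = ⊤)
    {D : Set E} {w d : E}
    (hw : w ∈ frechetNormalCone D x)
    (hmem : ∀ᶠ y in 𝓝 x, ∀ t : ℝ, 0 ≤ t → F y = t • f' d → y ∈ D) :
    (inner ℝ w d : ℝ) ≤ 0 := by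
  by_cases hd : d = 0
  · simp [hd]
  have hdpos : 0 < ‖d‖ := norm_pos_iff.mpr hd
  set f'symm := f'.nonlinearRightInverseOfSurjective hsurj with hf'symm
  have Mpos : 0 < (f'symm.nnnorm : ℝ) := by
    exact_mod_cast f'.nonlinearRightInverseOfSurjective_nnnorm_pos hsurj
  set c : NNReal := f'symm.nnnorm⁻¹ / 2 with hc
  have cpos : 0 < c := by
    rw [hc]
    have : (0:NNReal) < f'symm.nnnorm := by exact_mod_cast Mpos
    positivity
  obtain ⟨s, hs_nhds, hs⟩ := hF.approximates_deriv_on_nhds (Or.inr cpos)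
  set β : ℝ := (f'symm.nnnorm : ℝ)⁻¹ - (c : ℝ) with hβdef
  have hcℝ : (c : ℝ) = (f'symm.nnnorm : ℝ)⁻¹ / 2 := by
    rw [hc]; push_cast; ring
  have hβpos : 0 < β := by
    rw [hβdef, hcℝ]
    have : 0 < (f'symm.nnnorm : ℝ)⁻¹ := by positivity
    linarith
  have main : ∀ ε > (0:ℝ), (inner ℝ w d : ℝ) ≤ ε := by
    intro ε εpos
    set ε₁ : ℝ := ε / (2 * (‖d‖ + 1)) with hε₁def
    have ε₁pos : 0 < ε₁ := by positivity
    set η : ℝ := min (ε / (2 * (‖w‖ + 1))) 1 with hηdef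
    have ηpos : 0 < η := lt_min (by positivity) one_pos
    obtain ⟨δ, δpos, hδ⟩ := hw ε₁ ε₁pos
    obtain ⟨δm, δmpos, hδm⟩ := Metric.eventually_nhds_iff.mp hmem
    obtain ⟨δs, δspos, hδs⟩ := Metric.mem_nhds_iff.mp hs_nhds
    set κ : ℝ := β * η / ‖d‖ with hκdef
    have κpos : 0 < κ := by positivity
    have hγ : Filter.Tendsto (fun t : ℝ => x + t • d) (𝓝 0) (𝓝 x) := by
      have hcont : Continuous (fun t : ℝ => x + t • d) := by continuity
      have h0 : (fun t : ℝ => x + t • d) 0 = x := by simp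
      simpa [h0] using hcont.tendsto 0
    have hlo := (hF.hasFDerivAt.isLittleO).comp_tendsto hγ
    have h1 : ∀ᶠ t in 𝓝 (0:ℝ),
        ‖F (x + t • d) - t • f' d‖ ≤ κ * (|t| * ‖d‖) := by
      have := hlo.def κpos
      filter_upwards [this] with t ht
      simpa [hFx, norm_smul, Function.comp, mul_assoc] using ht
    have hdη : 0 < ‖d‖ + η := by positivity
    set T : ℝ := min (δs / (‖d‖ + η)) (min (δ / (‖d‖ + η)) (δm / (‖d‖ + η))) with hTdef
    have Tpos : 0 < T := lt_min (by positivity) (lt_min (by positivity) (by positivity))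
    have hTδs : T * (‖d‖ + η) ≤ δs := by
      calc T * (‖d‖ + η) ≤ (δs / (‖d‖ + η)) * (‖d‖ + η) := by
            gcongr; exact min_le_left _ _
        _ = δs := by field_simp
    have hTδ : T * (‖d‖ + η) ≤ δ := by
      calc T * (‖d‖ + η) ≤ (δ / (‖d‖ + η)) * (‖d‖ + η) := by
            gcongr; exact le_trans (min_le_right _ _) (min_le_left _ _)
        _ = δ := by field_simp
    have hTδm : T * (‖d‖ + η) ≤ δm := by
      calc T * (‖d‖ + η) ≤ (δm / (‖d‖ + η)) * (‖d‖ + η) := by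
            gcongr; exact le_trans (min_le_right _ _) (min_le_right _ _)
        _ = δm := by field_simp
    have h2 : ∀ᶠ t in 𝓝[>] (0:ℝ), t ∈ Ioo 0 T :=
      Ioo_mem_nhdsGT_of_mem ⟨le_refl 0, Tpos⟩
    have key : ∀ᶠ t in 𝓝[>] (0:ℝ),
        (inner ℝ w d : ℝ) ≤ ‖w‖ * η + ε₁ * (‖d‖ + η) := by
      filter_upwards [h1.filter_mono nhdsWithin_le_nhds, h2] with t hrt ht
      obtain ⟨htpos, htT⟩ := ht
      set b : E := x + t • d with hbdef
      set r : ℝ := ‖F b - t • f' d‖ with hrdef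
      have hrκ : r ≤ κ * (t * ‖d‖) := by
        rw [abs_of_pos htpos] at hrt; exact hrt
      set ρ : ℝ := r / β with hρdef
      have ρnonneg : 0 ≤ ρ := by positivity
      have hρη : ρ ≤ η * t := by
        rw [hρdef, div_le_iff₀ hβpos]
        calc r ≤ κ * (t * ‖d‖) := hrκ
        _ = η * t * β := by rw [hκdef]; field_simp
      have htTd : t * (‖d‖ + η) < T * (‖d‖ + η) := by gcongr
      have hball : closedBall b ρ ⊆ s := by
        intro z hz
        apply hδs
        rw [mem_ball]
        calc dist z x ≤ dist z b + dist b x := dist_triangle z b x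
          _ ≤ ρ + ‖t • d‖ := by
              gcongr
              · exact mem_closedBall.mp hz
              · rw [hbdef]; simp [dist_eq_norm]
          _ ≤ η * t + t * ‖d‖ := by
              rw [norm_smul, Real.norm_eq_abs, abs_of_pos htpos]; linarith
          _ = t * (‖d‖ + η) := by ring
          _ < T * (‖d‖ + η) := htTd
          _ ≤ δs := hTδs
      have hsurjon := (hs.mono_set hball).surjOn_closedBall_of_nonlinearRightInverse
        f'symm ρnonneg (subset_refl _)
      have htarget : t • f' d ∈ closedBall (F b) (((f'symm.nnnorm : ℝ)⁻¹ - c) * ρ) := by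
        rw [mem_closedBall, dist_eq_norm, ← norm_neg]
        simp only [neg_sub]
        rw [← hβdef, hρdef]
        have : β * (r / β) = r := by field_simp
        rw [this]
      obtain ⟨y, hy_ball, hy_eq⟩ := hsurjon htarget
      have hyb : ‖y - b‖ ≤ η * t := by
        have := mem_closedBall.mp hy_ball
        rw [dist_eq_norm] at this
        linarith
      have hyx : ‖y - x‖ ≤ t * (‖d‖ + η) := by
        have hyxe : y - x = (y - b) + t • d := by rw [hbdef]; abel
        rw [hyxe]
        calc ‖(y - b) + t • d‖ ≤ ‖y - b‖ + ‖t • d‖ := norm_add_le _ _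
          _ ≤ η * t + t * ‖d‖ := by
              rw [norm_smul, Real.norm_eq_abs, abs_of_pos htpos]; linarith
          _ = t * (‖d‖ + η) := by ring
      have hyD : y ∈ D := by
        apply hδm _ t (le_of_lt htpos) hy_eq
        rw [dist_eq_norm]
        exact lt_of_le_of_lt hyx (lt_of_lt_of_le htTd hTδm)
      have hnc := hδ y hyD (lt_of_le_of_lt hyx (lt_of_lt_of_le htTd hTδ))
      have hsplit : (inner ℝ w (y - x) : ℝ) = (inner ℝ w (y - b) : ℝ) + t * (inner ℝ w d : ℝ) := by
        have hyxe : y - x = (y - b) + t • d := by rw [hbdef]; abel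
        rw [hyxe, inner_add_right, real_inner_smul_right]
      have hib : |(inner ℝ w (y - b) : ℝ)| ≤ ‖w‖ * (η * t) := by
        calc |(inner ℝ w (y - b) : ℝ)| ≤ ‖w‖ * ‖y - b‖ := abs_real_inner_le_norm w (y - b)
          _ ≤ ‖w‖ * (η * t) := by gcongr
      have habs := abs_le.mp hib
      have hrhs : ε₁ * ‖y - x‖ ≤ ε₁ * (t * (‖d‖ + η)) := by gcongr
      have hmul : t * (inner ℝ w d : ℝ) ≤ ‖w‖ * (η * t) + ε₁ * (t * (‖d‖ + η)) := by
        have := hnc.trans hrhs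
        linarith [habs.1, habs.2]
      have hring : t * (‖w‖ * η + ε₁ * (‖d‖ + η)) = ‖w‖ * (η * t) + ε₁ * (t * (‖d‖ + η)) := by
        ring
      have hfin : t * (inner ℝ w d : ℝ) ≤ t * (‖w‖ * η + ε₁ * (‖d‖ + η)) := by
        rw [hring]; exact hmul
      exact le_of_mul_le_mul_left hfin htpos
    obtain ⟨t, ht⟩ := key.exists
    have hη1 : η ≤ 1 := min_le_right _ _
    have hηw : η ≤ ε / (2 * (‖w‖ + 1)) := min_le_left _ _
    have h1' : ‖w‖ * η ≤ ε / 2 := by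
      have hstep : ‖w‖ * η ≤ (‖w‖ + 1) * (ε / (2 * (‖w‖ + 1))) :=
        mul_le_mul (by linarith [norm_nonneg w]) hηw (le_of_lt ηpos) (by positivity)
      have heq : (‖w‖ + 1) * (ε / (2 * (‖w‖ + 1))) = ε / 2 := by
        have : ‖w‖ + 1 ≠ 0 := by positivity
        field_simp
      linarith [heq ▸ hstep]
    have h2' : ε₁ * (‖d‖ + η) ≤ ε / 2 := by
      have hstep : ε₁ * (‖d‖ + η) ≤ ε₁ * (‖d‖ + 1) := by gcongr
      have heq : ε₁ * (‖d‖ + 1) = ε / 2 := by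
        rw [hε₁def]
        have : ‖d‖ + 1 ≠ 0 := by positivity
        field_simp
      linarith [heq ▸ hstep]
    linarith
  by_contra hcon
  rw [not_le] at hcon
  have := main ((inner ℝ w d : ℝ) / 2) (by linarith)
  linarith



lemma fderiv_apply_eq_inner_gradient {E : Type*} [NormedAddCommGroup E]
    [InnerProductSpace ℝ E] [CompleteSpace E] (f : E → ℝ) (x d : E) :
    fderiv ℝ f x d = (inner ℝ (gradient f x) d : ℝ) := by
  rw [← InnerProductSpace.toDual_apply_apply, gradient, LinearIsometryEquiv.apply_symm_apply]

/-- Under LICQ (linear independence of the gradients of the equality constraints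
and of the active inequality constraints), the normal cone to
`D = {x : u_j(x) = 0 ∀j, v_l(x) ≤ 0 ∀l}` at `x*` is exactly the set of linear
combinations `Σ_j μ_j ∇u_j(x*) + Σ_{l active} λ_l ∇v_l(x*)` with `λ_l ≥ 0`. -/
theorem normalCone_of_LICQ
    {n J L : ℕ}
    (u : Fin J → EuclideanSpace ℝ (Fin n) → ℝ)
    (v : Fin L → EuclideanSpace ℝ (Fin n) → ℝ)
    (hu : ∀ j, ContDiff ℝ 1 (u j)) (hv : ∀ l, ContDiff ℝ 1 (v l))
    (D : Set (EuclideanSpace ℝ (Fin n)))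
    (hD : D = {x | (∀ j, u j x = 0) ∧ ∀ l, v l x ≤ 0})
    (xstar : EuclideanSpace ℝ (Fin n)) (hx : xstar ∈ D)
    (hLICQ : LinearIndependent ℝ
      (fun s : Fin J ⊕ {l : Fin L // v l xstar = 0} =>
        Sum.elim (fun j => gradient (u j) xstar)
          (fun l => gradient (v l.1) xstar) s)) :
    frechetNormalCone D xstar =
      {w | ∃ μ : Fin J → ℝ, ∃ lam : Fin L → ℝ,
        (∀ l, 0 ≤ lam l) ∧ (∀ l, v l xstar ≠ 0 → lam l = 0) ∧
        w = ∑ j, μ j • gradient (u j) xstar +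
            ∑ l, lam l • gradient (v l) xstar} := by
  classical
  have hx' := hx
  rw [hD] at hx'
  obtain ⟨hxu, hxv⟩ := hx'
  ext w
  simp only [Set.mem_setOf_eq]
  constructor
  · -- hard direction: normal cone ⊆ linear combinations
    intro hw
    set A := {l : Fin L // v l xstar = 0} with hA
    set g : (Fin J ⊕ A) → EuclideanSpace ℝ (Fin n) :=
      fun s => Sum.elim (fun j => gradient (u j) xstar)
        (fun l => gradient (v l.1) xstar) s with hgdef
    have hg : LinearIndependent ℝ g := hLICQ
    set φ : (Fin J ⊕ A) → EuclideanSpace ℝ (Fin n) → ℝ :=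
      fun i => Sum.elim u (fun l : A => v l.1) i with hφdef
    have hφ : ∀ i, ContDiff ℝ 1 (φ i) := by
      rintro (j | l)
      · exact hu j
      · exact hv l.1
    set F : EuclideanSpace ℝ (Fin n) → EuclideanSpace ℝ (Fin J ⊕ A) :=
      fun y => (WithLp.equiv 2 ((Fin J ⊕ A) → ℝ)).symm (fun i => φ i y) with hF
    set f' : EuclideanSpace ℝ (Fin n) →L[ℝ] EuclideanSpace ℝ (Fin J ⊕ A) :=
      ((PiLp.continuousLinearEquiv 2 ℝ (fun _ : Fin J ⊕ A => ℝ)).symm.toContinuousLinearMap).comp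
        (ContinuousLinearMap.pi (fun i => fderiv ℝ (φ i) xstar)) with hf'
    have hFapp : ∀ y i, F y i = φ i y := fun y i => rfl
    have hgφ : ∀ i, g i = gradient (φ i) xstar := by
      rintro (j | l) <;> rfl
    have hf'app : ∀ d i, f' d i = (inner ℝ (g i) d : ℝ) := by
      intro d i
      have h1 : f' d i = fderiv ℝ (φ i) xstar d := rfl
      rw [h1, fderiv_apply_eq_inner_gradient, hgφ i]
    have hFstrict : HasStrictFDerivAt F f' xstar := by
      rw [hasStrictFDerivAt_piLp]
      intro i
      exact ((hφ i).contDiffAt (x := xstar)).hasStrictFDerivAt one_ne_zero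
    have hFx0 : F xstar = 0 := by
      ext i
      rcases i with j | l
      · exact hxu j
      · exact l.2
    have hsurj : f'.range = ⊤ := by
      rw [LinearMap.range_eq_top]
      intro z
      obtain ⟨d, hd⟩ := exists_inner_eq_of_linearIndependent hg (fun i => z i)
      refine ⟨d, PiLp.ext fun i => ?_⟩
      exact (hf'app d i).trans (hd i)
    have hineq : ∀ᶠ y in 𝓝 xstar, ∀ l : Fin L, v l xstar ≠ 0 → v l y < 0 := by
      rw [Filter.eventually_all]
      intro l
      by_cases hl : v l xstar = 0
      · exact Filter.Eventually.of_forall (fun y h => absurd hl h)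
      · have hlt : v l xstar < 0 := lt_of_le_of_ne (hxv l) hl
        exact (((hv l).continuous.tendsto xstar).eventually_lt_const hlt).mono
          (fun y hy _ => hy)
    -- orthogonal decomposition
    set S : Submodule ℝ (EuclideanSpace ℝ (Fin n)) := Submodule.span ℝ (Set.range g) with hS
    set p : EuclideanSpace ℝ (Fin n) := (S.orthogonalProjection w : EuclideanSpace ℝ (Fin n))
      with hp
    set q : EuclideanSpace ℝ (Fin n) := w - p with hqdef
    have hqS : q ∈ Sᗮ := by exact Submodule.sub_starProjection_mem_orthogonal (K := S) w
    have hpS : p ∈ S := (S.orthogonalProjection w).2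
    have hinner_Sq : ∀ z ∈ S, (inner ℝ z q : ℝ) = 0 := (Submodule.mem_orthogonal S q).mp hqS
    have hinner_gq : ∀ i, (inner ℝ (g i) q : ℝ) = 0 := fun i =>
      hinner_Sq (g i) (Submodule.subset_span ⟨i, rfl⟩)
    have hf'q : f' q = 0 := by
      ext i
      rw [hf'app]
      exact hinner_gq i
    have hf'negq : f' (-q) = 0 := by rw [map_neg, hf'q, neg_zero]
    have hmemq : ∀ e : EuclideanSpace ℝ (Fin n), f' e = 0 →
        ∀ᶠ y in 𝓝 xstar, ∀ t : ℝ, 0 ≤ t → F y = t • f' e → y ∈ D := by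
      intro e he
      filter_upwards [hineq] with y hy t ht hFy
      rw [he, smul_zero] at hFy
      have hFy0 : ∀ i, F y i = 0 := fun i => by rw [hFy]; simp
      rw [hD]
      refine ⟨fun j => hFy0 (Sum.inl j), fun l => ?_⟩
      by_cases hl : v l xstar = 0
      · exact le_of_eq (hFy0 (Sum.inr ⟨l, hl⟩))
      · exact le_of_lt (hy l hl)
    have h1 := inner_nonpos_of_frechetNormalCone hFstrict hFx0 hsurj hw (hmemq q hf'q)
    have h2 := inner_nonpos_of_frechetNormalCone hFstrict hFx0 hsurj hw (hmemq (-q) hf'negq)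
    rw [inner_neg_right] at h2
    have hwq0 : (inner ℝ w q : ℝ) = 0 := le_antisymm h1 (by linarith)
    have hq0 : q = 0 := by
      have hpq : (inner ℝ p q : ℝ) = 0 := hinner_Sq p hpS
      have hwpq : (inner ℝ w q : ℝ) = (inner ℝ p q : ℝ) + (inner ℝ q q : ℝ) := by
        have hw' : w = p + q := by rw [hqdef]; abel
        rw [hw', inner_add_left]
      have : (inner ℝ q q : ℝ) = 0 := by linarith
      exact inner_self_eq_zero.mp this
    have hwp : w = p := sub_eq_zero.mp hq0
    have hwS : w ∈ S := hwp ▸ hpS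
    obtain ⟨cc, hcc⟩ := (Submodule.mem_span_range_iff_exists_fun ℝ).mp hwS
    -- nonnegativity of active coefficients
    have hcpos : ∀ l₀ : A, 0 ≤ cc (Sum.inr l₀) := by
      intro l₀
      obtain ⟨d, hd⟩ := exists_inner_eq_of_linearIndependent hg
        (fun i => if i = Sum.inr l₀ then (-1 : ℝ) else 0)
      have hmem : ∀ᶠ y in 𝓝 xstar, ∀ t : ℝ, 0 ≤ t → F y = t • f' d → y ∈ D := by
        filter_upwards [hineq] with y hy t ht hFy
        have hFy' : ∀ i, F y i = t * (if i = Sum.inr l₀ then (-1 : ℝ) else 0) := by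
          intro i
          have : F y i = (t • f' d) i := by rw [hFy]
          rw [this, PiLp.smul_apply, hf'app, hd i, smul_eq_mul]
        rw [hD]
        refine ⟨fun j => ?_, fun l => ?_⟩
        · have := hFy' (Sum.inl j)
          simp at this; exact this
        · by_cases hl : v l xstar = 0
          · have h3 := hFy' (Sum.inr ⟨l, hl⟩)
            rw [hFapp] at h3
            show v l y ≤ 0
            rw [show (v l y) = φ (Sum.inr (⟨l, hl⟩ : A)) y from rfl, h3]
            split_ifs
            · nlinarith
            · simp
          · exact le_of_lt (hy l hl)
      have hwd := inner_nonpos_of_frechetNormalCone hFstrict hFx0 hsurj hw hmem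
      have hinner_wd : (inner ℝ w d : ℝ) = -cc (Sum.inr l₀) := by
        rw [← hcc, sum_inner]
        have hterm : ∀ i : Fin J ⊕ A, (inner ℝ (cc i • g i) d : ℝ) =
            if i = Sum.inr l₀ then -cc i else 0 := by
          intro i
          rw [real_inner_smul_left, hd i]
          split_ifs <;> ring
        rw [Finset.sum_congr rfl (fun i _ => hterm i)]
        rw [Finset.sum_ite_eq' Finset.univ (Sum.inr l₀)]
        simp
      rw [hinner_wd] at hwd
      linarith
    refine ⟨fun j => cc (Sum.inl j),
      fun l => if h : v l xstar = 0 then cc (Sum.inr ⟨l, h⟩) else 0, ?_, ?_, ?_⟩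
    · intro l
      by_cases h : v l xstar = 0
      · simpa only [dif_pos h] using hcpos ⟨l, h⟩
      · simp only [dif_neg h]; exact le_rfl
    · intro l hl
      simp only [dif_neg hl]
    · rw [← hcc, Fintype.sum_sum_type]
      congr 1
      symm
      calc ∑ l : Fin L,
              (if h : v l xstar = 0 then cc (Sum.inr ⟨l, h⟩) else 0) •
                gradient (v l) xstar
          = ∑ l ∈ Finset.univ.filter (fun l : Fin L => v l xstar = 0),
              (if h : v l xstar = 0 then cc (Sum.inr ⟨l, h⟩) else 0) •
                gradient (v l) xstar := by
            symm
            apply Finset.sum_filter_of_ne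
            intro x _ hne
            by_contra hcon
            exact hne (by rw [dif_neg hcon, zero_smul])
        _ = ∑ l₀ : A,
              (if h : v l₀.1 xstar = 0 then cc (Sum.inr ⟨l₀.1, h⟩) else 0) •
                gradient (v l₀.1) xstar :=
            Finset.sum_subtype (Finset.univ.filter (fun l : Fin L => v l xstar = 0))
              (fun x => by simp) (fun l : Fin L =>
                (if h : v l xstar = 0 then cc (Sum.inr ⟨l, h⟩) else 0) •
                  gradient (v l) xstar)
        _ = ∑ l₀ : A, cc (Sum.inr l₀) • g (Sum.inr l₀) := by
            refine Finset.sum_congr rfl fun l₀ _ => ?_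
            rw [dif_pos l₀.2]
            rfl
  · -- easy direction
    rintro ⟨μ, lam, hlamnn, hlam0, hwdef⟩
    intro ε εpos
    set C : ℝ := (∑ j, |μ j|) + (∑ l, lam l) + 1 with hCdef
    have hμnn : 0 ≤ ∑ j, |μ j| := Finset.sum_nonneg fun j _ => abs_nonneg _
    have hlnn : 0 ≤ ∑ l, lam l := Finset.sum_nonneg fun l _ => hlamnn l
    have hCpos : 0 < C := by rw [hCdef]; linarith
    set ε' : ℝ := ε / C with hε'def
    have hε'pos : 0 < ε' := div_pos εpos hCpos
    have hev : ∀ᶠ y in 𝓝 xstar,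
        (∀ j, |u j y - u j xstar - (inner ℝ (gradient (u j) xstar) (y - xstar) : ℝ)|
            ≤ ε' * ‖y - xstar‖) ∧
        (∀ l, |v l y - v l xstar - (inner ℝ (gradient (v l) xstar) (y - xstar) : ℝ)|
            ≤ ε' * ‖y - xstar‖) := by
      apply Filter.Eventually.and
      · rw [Filter.eventually_all]
        intro j
        have hgr : HasGradientAt (u j) (gradient (u j) xstar) xstar :=
          (((hu j).differentiable one_ne_zero) xstar).hasGradientAt
        have := (hasGradientAt_iff_isLittleO.mp hgr).def hε'pos
        filter_upwards [this] with y hy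
        simpa [Real.norm_eq_abs] using hy
      · rw [Filter.eventually_all]
        intro l
        have hgr : HasGradientAt (v l) (gradient (v l) xstar) xstar :=
          (((hv l).differentiable one_ne_zero) xstar).hasGradientAt
        have := (hasGradientAt_iff_isLittleO.mp hgr).def hε'pos
        filter_upwards [this] with y hy
        simpa [Real.norm_eq_abs] using hy
    obtain ⟨δ, δpos, hδ⟩ := Metric.eventually_nhds_iff.mp hev
    refine ⟨δ, δpos, fun y hyD hy => ?_⟩
    have hyD' := hyD
    rw [hD] at hyD'
    obtain ⟨hyu, hyv⟩ := hyD'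
    obtain ⟨hju, hlv⟩ := hδ (show dist y xstar < δ by rw [dist_eq_norm]; exact hy)
    have hnn : 0 ≤ ‖y - xstar‖ := norm_nonneg _
    have hj : ∀ j, μ j * (inner ℝ (gradient (u j) xstar) (y - xstar) : ℝ)
        ≤ |μ j| * (ε' * ‖y - xstar‖) := by
      intro j
      have h := hju j
      rw [hyu j, hxu j] at h
      simp only [sub_zero, zero_sub, abs_neg] at h
      calc μ j * (inner ℝ (gradient (u j) xstar) (y - xstar) : ℝ)
          ≤ |μ j * (inner ℝ (gradient (u j) xstar) (y - xstar) : ℝ)| := le_abs_self _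
        _ = |μ j| * |(inner ℝ (gradient (u j) xstar) (y - xstar) : ℝ)| := abs_mul _ _
        _ ≤ |μ j| * (ε' * ‖y - xstar‖) := by gcongr
    have hl : ∀ l, lam l * (inner ℝ (gradient (v l) xstar) (y - xstar) : ℝ)
        ≤ lam l * (ε' * ‖y - xstar‖) := by
      intro l
      by_cases hl0 : v l xstar = 0
      · have h := hlv l
        rw [hl0, sub_zero] at h
        have h1 := (abs_le.mp h).1
        have h2 := hyv l
        have : (inner ℝ (gradient (v l) xstar) (y - xstar) : ℝ) ≤ ε' * ‖y - xstar‖ := by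
          linarith
        exact mul_le_mul_of_nonneg_left this (hlamnn l)
      · rw [hlam0 l hl0]
        simp
    have hsplit : (inner ℝ w (y - xstar) : ℝ) =
        (∑ j, μ j * (inner ℝ (gradient (u j) xstar) (y - xstar) : ℝ)) +
        (∑ l, lam l * (inner ℝ (gradient (v l) xstar) (y - xstar) : ℝ)) := by
      rw [hwdef, inner_add_left, sum_inner, sum_inner]
      congr 1
      · exact Finset.sum_congr rfl fun j _ => real_inner_smul_left _ _ _
      · exact Finset.sum_congr rfl fun l _ => real_inner_smul_left _ _ _
    rw [hsplit]
    calc (∑ j, μ j * (inner ℝ (gradient (u j) xstar) (y - xstar) : ℝ)) +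
        (∑ l, lam l * (inner ℝ (gradient (v l) xstar) (y - xstar) : ℝ))
        ≤ (∑ j, |μ j| * (ε' * ‖y - xstar‖)) + (∑ l, lam l * (ε' * ‖y - xstar‖)) :=
          add_le_add (Finset.sum_le_sum fun j _ => hj j) (Finset.sum_le_sum fun l _ => hl l)
      _ = ((∑ j, |μ j|) + (∑ l, lam l)) * (ε' * ‖y - xstar‖) := by
          rw [← Finset.sum_mul, ← Finset.sum_mul, add_mul]
      _ ≤ C * (ε' * ‖y - xstar‖) := by
          have : (∑ j, |μ j|) + (∑ l, lam l) ≤ C := by rw [hCdef]; linarith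
          have h2 : 0 ≤ ε' * ‖y - xstar‖ := by positivity
          exact mul_le_mul_of_nonneg_right this h2
      _ = ε * ‖y - xstar‖ := by
          rw [hε'def]
          field_simp
end

section
/- Under the generalized LICQ condition, the normal cone of the intersection of a closed set D with a linear subspace L at x* ∈ D ∩ L satisfies N_{D∩L}(x*) ⊆ N_D(x*) + Lᗮ, provided N_D(x*) ∩ (−Lᗮ) = {0}. -/
open Pointwise

/-- The limiting (Mordukhovich) normal cone to `D` at `x`: limits of regular
normals at nearby points of `D`. -/
def limitingNormalCone {V : Type*} [NormedAddCommGroup V] [InnerProductSpace ℝ V]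
    (D : Set V) (x : V) : Set V :=
  {v | ∃ xs vs : ℕ → V, (∀ i, xs i ∈ D) ∧
    (∀ i, vs i ∈ frechetNormalCone D (xs i)) ∧
    Filter.Tendsto xs Filter.atTop (nhds x) ∧
    Filter.Tendsto vs Filter.atTop (nhds v)}

lemma frechet_smul {V : Type*} [NormedAddCommGroup V] [InnerProductSpace ℝ V]
    {D : Set V} {x v : V} (hv : v ∈ frechetNormalCone D x) {c : ℝ}
    (hc0 : 0 ≤ c) (hc1 : c ≤ 1) : c • v ∈ frechetNormalCone D x := by
  intro ε hε
  obtain ⟨δ, hδ, h⟩ := hv ε hε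
  refine ⟨δ, hδ, fun y hy hyδ => ?_⟩
  rw [real_inner_smul_left]
  calc c * (inner ℝ v (y - x) : ℝ) ≤ c * (ε * ‖y - x‖) :=
        mul_le_mul_of_nonneg_left (h y hy hyδ) hc0
    _ ≤ 1 * (ε * ‖y - x‖) := by
        apply mul_le_mul_of_nonneg_right hc1
        positivity
    _ = ε * ‖y - x‖ := one_mul _

lemma frechet_of_prox {V : Type*} [NormedAddCommGroup V] [InnerProductSpace ℝ V]
    {D : Set V} {x u : V} {C m : ℝ} (hC : 0 ≤ C) (hm : 0 < m)
    (h : ∀ y ∈ D, ‖y - x‖ < m → (inner ℝ u (y - x) : ℝ) ≤ C * ‖y - x‖ ^ 2) :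
    u ∈ frechetNormalCone D x := by
  intro ε hε
  refine ⟨min m (ε / (C + 1)), lt_min hm (by positivity), fun y hy hyδ => ?_⟩
  have h1 : ‖y - x‖ < m := lt_of_lt_of_le hyδ (min_le_left _ _)
  have h2 : ‖y - x‖ ≤ ε / (C + 1) := le_of_lt (lt_of_lt_of_le hyδ (min_le_right _ _))
  have := h y hy h1
  have hn : (0:ℝ) ≤ ‖y - x‖ := norm_nonneg _
  have h2' : ‖y - x‖ * (C + 1) ≤ ε := (le_div_iff₀ (by positivity)).mp h2
  calc (inner ℝ u (y - x) : ℝ) ≤ C * ‖y - x‖ ^ 2 := this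
    _ ≤ ε * ‖y - x‖ := by nlinarith [hn, h2', hC]

set_option maxHeartbeats 1000000 in
lemma fuzzy_decomp {V : Type*} [NormedAddCommGroup V] [InnerProductSpace ℝ V]
    [FiniteDimensional ℝ V]
    (D : Set V) (hD : IsClosed D) (L : Submodule ℝ V)
    {x v : V} (hxD : x ∈ D) (hxL : x ∈ L)
    (hv : v ∈ frechetNormalCone (D ∩ (L : Set V)) x)
    {ε r : ℝ} (hε : 0 < ε) (hr : 0 < r) :
    ∃ y u w, y ∈ D ∧ ‖y - x‖ ≤ r ∧ u ∈ frechetNormalCone D y ∧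
      w ∈ (Lᗮ : Set V) ∧ ‖v - u - w‖ ≤ 2 * ε := by
  obtain ⟨δ, hδ, hfre⟩ := hv (ε/2) (by positivity)
  -- work with r' := min r (δ/2)
  set r' : ℝ := min r (δ/2) with hr'def
  have hr' : 0 < r' := lt_min hr (by positivity)
  have hr'δ : r' < δ := lt_of_le_of_lt (min_le_right _ _) (by linarith)
  have hr'r : r' ≤ r := min_le_left _ _
  set P : V → V := fun z => (Submodule.orthogonalProjectionOnto L z : V) with hPdef
  have hPcont : Continuous P := continuous_subtype_val.comp (Submodule.orthogonalProjectionOnto L).continuous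
  have hPsub : ∀ z₁ z₂ : V, P (z₁ - z₂) = P z₁ - P z₂ := by
    intro z₁ z₂; simp only [hPdef, map_sub]; rfl
  have hPnorm : ∀ z : V, ‖P z‖ ≤ ‖z‖ := by
    intro z
    calc ‖P z‖ = ‖Submodule.orthogonalProjectionOnto L z‖ := rfl
      _ ≤ ‖Submodule.orthogonalProjectionOnto L‖ * ‖z‖ := (Submodule.orthogonalProjectionOnto L).le_opNorm z
      _ ≤ ‖z‖ := by
          nlinarith [Submodule.orthogonalProjectionOnto_norm_le L, norm_nonneg z,
            (Submodule.orthogonalProjectionOnto L).opNorm_nonneg]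
  have hPmem : ∀ z : V, P z ∈ L := fun z => (Submodule.orthogonalProjectionOnto L z).2
  have hQmem : ∀ z : V, z - P z ∈ Lᗮ := fun z => Submodule.sub_starProjection_mem_orthogonal (K := L) z
  have hPadj : ∀ z w : V, (inner ℝ (P z) w : ℝ) = inner ℝ z (P w) :=
    fun z w => Submodule.inner_starProjection_left_eq_right L z w
  have hPx : P 0 = 0 := by simp [hPdef]
  -- the penalized functions
  set g : ℝ → V → ℝ := fun ρ y =>
    -(inner ℝ v (P (y - x)) : ℝ) + (ε/r') * ‖P (y - x)‖^2 + (ρ/2) * ‖(y - x) - P (y - x)‖^2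
    with hgdef
  have hgcont : ∀ ρ, Continuous (g ρ) := by
    intro ρ
    apply Continuous.add
    apply Continuous.add
    · exact (continuous_const.inner (hPcont.comp (continuous_id.sub continuous_const))).neg
    · exact continuous_const.mul (((hPcont.comp (continuous_id.sub continuous_const)).norm).pow 2)
    · exact continuous_const.mul
        ((((continuous_id.sub continuous_const).sub (hPcont.comp (continuous_id.sub continuous_const))).norm).pow 2)
  have hgx : ∀ ρ, g ρ x = 0 := by intro ρ; simp [hgdef, hPx]
  -- minimizers over K
  set K : Set V := D ∩ Metric.closedBall x r' with hKdef
  have hKcomp : IsCompact K := (isCompact_closedBall x r').inter_left hD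
  have hxK : x ∈ K := ⟨hxD, Metric.mem_closedBall_self hr'.le⟩
  have hmin : ∀ n : ℕ, ∃ y ∈ K, ∀ z ∈ K, g (n+1) y ≤ g (n+1) z := by
    intro n
    obtain ⟨y, hyK, hymin⟩ := hKcomp.exists_isMinOn ⟨x, hxK⟩ ((hgcont (n+1)).continuousOn)
    exact ⟨y, hyK, fun z hz => hymin hz⟩
  choose y hyK hymin using hmin
  have hyD : ∀ n, y n ∈ D := fun n => (hyK n).1
  have hyB : ∀ n, ‖y n - x‖ ≤ r' := by
    intro n
    have := (hyK n).2
    rwa [Metric.mem_closedBall, dist_eq_norm] at this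
  have hg0 : ∀ n : ℕ, g (n+1) (y n) ≤ 0 := by
    intro n; rw [← hgx (n+1)]; exact hymin n x hxK
  -- bound on the L-orthogonal part
  have hQ2 : ∀ n : ℕ, ‖(y n - x) - P (y n - x)‖^2 ≤ 2*‖v‖*r' / (n+1) := by
    intro n
    have h0 := hg0 n
    simp only [hgdef] at h0
    have hb : (inner ℝ v (P (y n - x)) : ℝ) ≤ ‖v‖ * r' := by
      calc (inner ℝ v (P (y n - x)) : ℝ) ≤ ‖v‖ * ‖P (y n - x)‖ := real_inner_le_norm _ _
        _ ≤ ‖v‖ * r' :=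
          mul_le_mul_of_nonneg_left (le_trans (hPnorm _) (hyB n)) (norm_nonneg v)
    have hnn1 : (0:ℝ) ≤ (ε/r') * ‖P (y n - x)‖^2 := by positivity
    rw [le_div_iff₀ (show (0:ℝ) < (n:ℝ)+1 by positivity)]
    nlinarith
  -- the linear part is dominated
  have hA : ∀ n : ℕ, (ε/r') * ‖P (y n - x)‖^2 - (inner ℝ v (P (y n - x)) : ℝ) ≤ 0 := by
    intro n
    have h0 := hg0 n
    simp only [hgdef] at h0
    have hnn2 : (0:ℝ) ≤ (((n:ℝ)+1)/2) * ‖(y n - x) - P (y n - x)‖^2 := by positivity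
    nlinarith
  -- there is a minimizer strictly inside the ball
  have hexists : ∃ n : ℕ, ‖y n - x‖ < r' := by
    by_contra hcon
    push_neg at hcon
    have heq : ∀ n, ‖y n - x‖ = r' := fun n => le_antisymm (hyB n) (hcon n)
    obtain ⟨yb, hybK, φ, hφ, hconv⟩ := hKcomp.tendsto_subseq hyK
    have hybD : yb ∈ D := hybK.1
    have hconv' : Filter.Tendsto (fun j => y (φ j) - x) Filter.atTop (nhds (yb - x)) :=
      hconv.sub tendsto_const_nhds
    -- norm of yb - x is r'
    have hnrm : ‖yb - x‖ = r' := by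
      have h1 : Filter.Tendsto (fun j => ‖y (φ j) - x‖) Filter.atTop (nhds (‖yb - x‖)) :=
        hconv'.norm
      have h2 : (fun j => ‖y (φ j) - x‖) = fun _ => r' := funext fun j => heq (φ j)
      rw [h2] at h1
      exact tendsto_nhds_unique h1 tendsto_const_nhds
    -- the orthogonal part of yb - x vanishes
    have hQbar : (yb - x) - P (yb - x) = 0 := by
      have h1 : Filter.Tendsto (fun j => ‖(y (φ j) - x) - P (y (φ j) - x)‖^2)
          Filter.atTop (nhds (‖(yb - x) - P (yb - x)‖^2)) :=
        ((hconv'.sub ((hPcont.tendsto _).comp hconv')).norm).pow 2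
      have hb0 : Filter.Tendsto (fun j : ℕ => 2*‖v‖*r' / ((φ j : ℝ)+1))
          Filter.atTop (nhds 0) := by
        apply Filter.Tendsto.comp (g := fun n : ℕ => 2*‖v‖*r' / ((n:ℝ)+1))
        · have := (tendsto_one_div_add_atTop_nhds_zero_nat).const_mul (2*‖v‖*r')
          simpa [div_eq_mul_inv, mul_comm, mul_assoc, mul_left_comm] using this
        · exact hφ.tendsto_atTop
      have h3 : Filter.Tendsto (fun j => ‖(y (φ j) - x) - P (y (φ j) - x)‖^2)
          Filter.atTop (nhds 0) := by
        apply squeeze_zero (fun j => by positivity) (fun j => hQ2 (φ j)) hb0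
      have h4 : ‖(yb - x) - P (yb - x)‖^2 = 0 := tendsto_nhds_unique h1 h3
      have := pow_eq_zero_iff (n := 2) (by norm_num) |>.mp h4
      exact norm_eq_zero.mp this
    have hPbar : P (yb - x) = yb - x := (sub_eq_zero.mp hQbar).symm
    have hybL : yb ∈ L := by
      have h1 : yb - x ∈ L := hPbar ▸ hPmem (yb - x)
      have h2 := L.add_mem h1 hxL
      simpa using h2
    have hfr := hfre yb ⟨hybD, hybL⟩ (by rw [hnrm]; exact hr'δ)
    have hAlim : ε / r' * ‖P (yb - x)‖^2 - (inner ℝ v (P (yb - x)) : ℝ) ≤ 0 := by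
      have hp : Filter.Tendsto (fun j => P (y (φ j) - x)) Filter.atTop
          (nhds (P (yb - x))) := (hPcont.tendsto _).comp hconv'
      have h1 : Filter.Tendsto
          (fun j => ε / r' * ‖P (y (φ j) - x)‖^2 - (inner ℝ v (P (y (φ j) - x)) : ℝ))
          Filter.atTop
          (nhds (ε / r' * ‖P (yb - x)‖^2 - (inner ℝ v (P (yb - x)) : ℝ))) :=
        ((hp.norm.pow 2).const_mul _).sub ((tendsto_const_nhds (x := v)).inner hp)
      exact le_of_tendsto h1 (Filter.Eventually.of_forall fun j => hA (φ j))
    rw [hPbar] at hAlim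
    rw [hnrm] at hfr hAlim
    have hrr : (ε/r') * r'^2 = ε * r' := by field_simp
    nlinarith [hfr, hAlim, hrr, mul_pos hε hr']
  -- step (d): optimality conditions at an interior minimizer
  obtain ⟨n, hlt⟩ := hexists
  set Y : V := y n with hYdef
  set ρ : ℝ := (n:ℝ) + 1 with hρdef
  have hρpos : (0:ℝ) < ρ := by positivity
  set a : V := P (Y - x) with hadef
  set b : V := (Y - x) - P (Y - x) with hbdef
  set u : V := P v - (2*ε/r') • a - ρ • b with hudef
  set w : V := (v - P v) + ρ • b with hwdef
  have hwmem : w ∈ Lᗮ :=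
    Submodule.add_mem _ (hQmem v) (Submodule.smul_mem _ ρ (hQmem (Y - x)))
  have hanorm : ‖a‖ ≤ r' := le_trans (hPnorm _) (hyB n)
  have hufre : u ∈ frechetNormalCone D Y := by
    apply frechet_of_prox (C := ε/r' + ρ/2) (m := r' - ‖Y - x‖) (by positivity) (by linarith)
    intro y' hy'D hy'near
    set h : V := y' - Y with hhdef
    have hy'K : y' ∈ K := by
      refine ⟨hy'D, ?_⟩
      rw [Metric.mem_closedBall, dist_eq_norm]
      calc ‖y' - x‖ = ‖(y' - Y) + (Y - x)‖ := by abel_nf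
        _ ≤ ‖y' - Y‖ + ‖Y - x‖ := norm_add_le _ _
        _ ≤ r' := by rw [← hhdef]; linarith
    have hgin : g ρ Y ≤ g ρ y' := hymin n y' hy'K
    simp only [hgdef] at hgin
    have e0 : y' - x = (Y - x) + h := by simp only [hhdef]; abel
    have e1 : P (y' - x) = a + P h := by
      rw [e0]
      simp only [hPdef, map_add]
      push_cast
      rfl
    have e2 : (y' - x) - P (y' - x) = b + (h - P h) := by
      rw [e1, e0]; simp only [hbdef]; abel
    have e3 : (inner ℝ v (P (y' - x)) : ℝ) = inner ℝ v a + (inner ℝ (P v) h : ℝ) := by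
      rw [e1, inner_add_right, ← hPadj v h]
    have e4 : ‖P (y' - x)‖^2 = ‖a‖^2 + 2*(inner ℝ a (P h) : ℝ) + ‖P h‖^2 := by
      rw [e1]; exact norm_add_sq_real a (P h)
    have e5 : ‖(y' - x) - P (y' - x)‖^2
        = ‖b‖^2 + 2*(inner ℝ b (h - P h) : ℝ) + ‖h - P h‖^2 := by
      rw [e2]; exact norm_add_sq_real b (h - P h)
    have e6 : (inner ℝ a (P h) : ℝ) = inner ℝ a h := by
      have hz : (inner ℝ a (h - P h) : ℝ) = 0 :=
        (Submodule.mem_orthogonal L (h - P h)).mp (hQmem h) a (hPmem (Y - x))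
      rw [inner_sub_right] at hz
      linarith
    have e7 : (inner ℝ b (h - P h) : ℝ) = inner ℝ b h := by
      have hz : (inner ℝ (P h) b : ℝ) = 0 :=
        ((Submodule.mem_orthogonal L b).mp (hQmem (Y - x)) (P h) (hPmem h))
      rw [real_inner_comm] at hz
      rw [inner_sub_right, hz]
      ring
    have e8 : (inner ℝ u h : ℝ)
        = (inner ℝ (P v) h : ℝ) - (2*ε/r')*(inner ℝ a h : ℝ) - ρ*(inner ℝ b h : ℝ) := by
      simp only [hudef, inner_sub_left, real_inner_smul_left]
    have hpyth : ‖h‖^2 = ‖P h‖^2 + ‖h - P h‖^2 := by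
      have hz : (inner ℝ (P h) (h - P h) : ℝ) = 0 :=
        (Submodule.mem_orthogonal L (h - P h)).mp (hQmem h) (P h) (hPmem h)
      have : ‖P h + (h - P h)‖^2 = ‖P h‖^2 + 2*(inner ℝ (P h) (h - P h) : ℝ) + ‖h - P h‖^2 :=
        norm_add_sq_real _ _
      rw [hz] at this
      have hsum : P h + (h - P h) = h := by abel
      rw [hsum] at this
      linarith
    rw [e3, e4, e5, ← hadef, ← hbdef] at hgin
    have key : (inner ℝ (P v) h : ℝ) ≤ (2*ε/r')*(inner ℝ a (P h) : ℝ) + (ε/r')*‖P h‖^2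
        + ρ*(inner ℝ b (h - P h) : ℝ) + (ρ/2)*‖h - P h‖^2 := by
      have hg2 := hgin
      ring_nf at hg2 ⊢
      linarith [hg2]
    have hP2' : ‖P h‖^2 ≤ ‖h‖^2 := by nlinarith [hpyth, sq_nonneg ‖h - P h‖]
    have hQ2' : ‖h - P h‖^2 ≤ ‖h‖^2 := by nlinarith [hpyth, sq_nonneg ‖P h‖]
    have m1 : (ε/r')*‖P h‖^2 ≤ (ε/r')*‖h‖^2 :=
      mul_le_mul_of_nonneg_left hP2' (by positivity)
    have m2 : (ρ/2)*‖h - P h‖^2 ≤ (ρ/2)*‖h‖^2 :=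
      mul_le_mul_of_nonneg_left hQ2' (by positivity)
    rw [e8, ← e6, ← e7]
    linarith [key, m1, m2]
  refine ⟨Y, u, w, hyD n, le_trans (hyB n) hr'r, hufre, hwmem, ?_⟩
  have hvuw : v - u - w = (2*ε/r') • a := by
    simp only [hudef, hwdef]; abel
  rw [hvuw, norm_smul, Real.norm_eq_abs, abs_of_pos (by positivity)]
  calc (2*ε/r') * ‖a‖ ≤ (2*ε/r') * r' :=
        mul_le_mul_of_nonneg_left hanorm (by positivity)
    _ = 2*ε := by field_simp

set_option maxHeartbeats 1000000 in
/-- Under the constraint qualification `N_D(x*) ∩ (−N_L(x*)) = {0}` (with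
`N_L(x*) = Lᗮ`), the limiting normal cone of the intersection of a closed set `D`
with a linear subspace `L` satisfies `N_{D∩L}(x*) ⊆ N_D(x*) + Lᗮ`. -/
theorem normalCone_intersection_subspace
    {V : Type*} [NormedAddCommGroup V] [InnerProductSpace ℝ V]
    [FiniteDimensional ℝ V]
    (D : Set V) (hD : IsClosed D) (L : Submodule ℝ V)
    (xstar : V) (hxD : xstar ∈ D) (hxL : xstar ∈ L)
    (hCQ : limitingNormalCone D xstar ∩ (-(Lᗮ : Set V)) = {0}) :
    limitingNormalCone (D ∩ (L : Set V)) xstar ⊆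
      limitingNormalCone D xstar + (Lᗮ : Set V) := by
  intro v hv
  obtain ⟨xs, vs, hxsmem, hvs, hxs, hvsv⟩ := hv
  -- apply the fuzzy decomposition along the sequence
  have happ : ∀ k : ℕ, ∃ y u w, y ∈ D ∧ ‖y - xs k‖ ≤ 1/((k:ℝ)+1) ∧
      u ∈ frechetNormalCone D y ∧ w ∈ (Lᗮ : Set V) ∧
      ‖vs k - u - w‖ ≤ 2 * (1/(2*((k:ℝ)+1))) := fun k =>
    fuzzy_decomp D hD L (hxsmem k).1 (hxsmem k).2 (hvs k)
      (by positivity) (by positivity)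
  choose y u w hyD hynear hufre hwmem hclose using happ
  have hLclosed : IsClosed (Lᗮ : Set V) := Submodule.closed_of_finiteDimensional _
  have hone : Filter.Tendsto (fun k : ℕ => 1/((k:ℝ)+1)) Filter.atTop (nhds 0) :=
    tendsto_one_div_add_atTop_nhds_zero_nat
  -- y tends to xstar
  have hy : Filter.Tendsto y Filter.atTop (nhds xstar) := by
    rw [tendsto_iff_dist_tendsto_zero]
    have hxs0 : Filter.Tendsto (fun k : ℕ => dist (xs k) xstar) Filter.atTop (nhds 0) :=
      tendsto_iff_dist_tendsto_zero.mp hxs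
    refine squeeze_zero (g := fun k : ℕ => 1/((k:ℝ)+1) + dist (xs k) xstar)
      (fun k => dist_nonneg) (fun k => ?_) ?_
    · skip
      calc dist (y k) xstar ≤ dist (y k) (xs k) + dist (xs k) xstar := dist_triangle _ _ _
        _ ≤ 1/((k:ℝ)+1) + dist (xs k) xstar := by
            have : dist (y k) (xs k) = ‖y k - xs k‖ := dist_eq_norm _ _
            rw [this]; linarith [hynear k]
    · simpa using hone.add hxs0
  -- u + w tends to v
  have hres : Filter.Tendsto (fun k => vs k - u k - w k) Filter.atTop (nhds 0) := by
    refine squeeze_zero_norm (fun k => ?_) hone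
    have h1 := hclose k
    have h2 : 2 * (1/(2*((k:ℝ)+1))) = 1/((k:ℝ)+1) := by
      field_simp
    linarith [h1, h2.le]
  have hsum : Filter.Tendsto (fun k => u k + w k) Filter.atTop (nhds v) := by
    have heq : (fun k => u k + w k) = fun k => vs k - (vs k - u k - w k) :=
      funext fun k => by abel
    rw [heq]
    simpa using hvsv.sub hres
  -- scaling sequence
  set t : ℕ → ℝ := fun k => max 1 (max ‖u k‖ ‖w k‖) with htdef
  have ht1 : ∀ k, (1:ℝ) ≤ t k := fun k => le_max_left _ _
  have htpos : ∀ k, (0:ℝ) < t k := fun k => lt_of_lt_of_le one_pos (ht1 k)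
  have htu : ∀ k, ‖u k‖ ≤ t k := fun k => le_trans (le_max_left _ _) (le_max_right _ _)
  have htw : ∀ k, ‖w k‖ ≤ t k := fun k => le_trans (le_max_right _ _) (le_max_right _ _)
  by_cases hbd : ∃ M : ℝ, ∃ᶠ k in Filter.atTop, t k ≤ M
  · -- bounded case : extract convergent subsequence of u
    obtain ⟨M, hM⟩ := hbd
    obtain ⟨φ, hφmono, hφle⟩ := Filter.extraction_of_frequently_atTop hM
    have hball : ∀ j, u (φ j) ∈ Metric.closedBall (0:V) M := fun j => by
      rw [Metric.mem_closedBall, dist_zero_right]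
      exact le_trans (htu (φ j)) (hφle j)
    obtain ⟨uinf, _, ψ, hψmono, hψconv⟩ :=
      (isCompact_closedBall (0:V) M).tendsto_subseq hball
    have hσmono : StrictMono (φ ∘ ψ) := hφmono.comp hψmono
    have huconv : Filter.Tendsto (fun j => u (φ (ψ j))) Filter.atTop (nhds uinf) := hψconv
    have huN : uinf ∈ limitingNormalCone D xstar :=
      ⟨fun j => y (φ (ψ j)), fun j => u (φ (ψ j)), fun j => hyD _, fun j => hufre _,
        hy.comp hσmono.tendsto_atTop, huconv⟩
    have hwconv : Filter.Tendsto (fun j => w (φ (ψ j))) Filter.atTop (nhds (v - uinf)) := by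
      have heq : (fun j => w (φ (ψ j)))
          = fun j => (u (φ (ψ j)) + w (φ (ψ j))) - u (φ (ψ j)) :=
        funext fun j => by abel
      rw [heq]
      exact (hsum.comp hσmono.tendsto_atTop).sub huconv
    have hwN : v - uinf ∈ (Lᗮ : Set V) :=
      hLclosed.mem_of_tendsto hwconv (Filter.Eventually.of_forall fun j => hwmem _)
    have := Set.add_mem_add huN hwN
    rwa [show uinf + (v - uinf) = v by abel] at this
  · -- unbounded case : contradiction with the constraint qualification
    exfalso
    push_neg at hbd
    have ht : Filter.Tendsto t Filter.atTop Filter.atTop := by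
      rw [Filter.tendsto_atTop]
      intro M
      have h1 := hbd M
      exact h1.mono fun k hk => hk.le
    have hinv : Filter.Tendsto (fun k => (t k)⁻¹) Filter.atTop (nhds 0) :=
      tendsto_inv_atTop_zero.comp ht
    set u' : ℕ → V := fun k => (t k)⁻¹ • u k with hu'def
    set w' : ℕ → V := fun k => (t k)⁻¹ • w k with hw'def
    have hu'norm : ∀ k, ‖u' k‖ = (t k)⁻¹ * ‖u k‖ := fun k => by
      rw [hu'def]
      rw [norm_smul, Real.norm_eq_abs, abs_of_pos (inv_pos.mpr (htpos k))]
    have hw'norm : ∀ k, ‖w' k‖ = (t k)⁻¹ * ‖w k‖ := fun k => by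
      rw [hw'def]
      rw [norm_smul, Real.norm_eq_abs, abs_of_pos (inv_pos.mpr (htpos k))]
    have hmem' : ∀ k, (u' k, w' k) ∈
        (Metric.closedBall (0:V) 1) ×ˢ (Metric.closedBall (0:V) 1) := by
      intro k
      have hb : ∀ z : V, ‖z‖ ≤ t k → (t k)⁻¹ * ‖z‖ ≤ 1 := by
        intro z hz
        calc (t k)⁻¹ * ‖z‖ ≤ (t k)⁻¹ * t k :=
              mul_le_mul_of_nonneg_left hz (inv_nonneg.mpr (htpos k).le)
          _ = 1 := inv_mul_cancel₀ (htpos k).ne'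
      constructor
      · rw [Metric.mem_closedBall, dist_zero_right, hu'norm k]
        exact hb _ (htu k)
      · rw [Metric.mem_closedBall, dist_zero_right, hw'norm k]
        exact hb _ (htw k)
    obtain ⟨⟨uinf, winf⟩, _, φ, hφmono, hconv⟩ :=
      ((isCompact_closedBall (0:V) 1).prod (isCompact_closedBall (0:V) 1)).tendsto_subseq hmem'
    have huc : Filter.Tendsto (fun j => u' (φ j)) Filter.atTop (nhds uinf) :=
      (continuous_fst.tendsto (uinf, winf)).comp hconv
    have hwc : Filter.Tendsto (fun j => w' (φ j)) Filter.atTop (nhds winf) :=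
      (continuous_snd.tendsto (uinf, winf)).comp hconv
    -- the sum of the scaled sequences tends to 0
    have hsum0 : Filter.Tendsto (fun k => u' k + w' k) Filter.atTop (nhds 0) := by
      have heq : (fun k => u' k + w' k) = fun k => (t k)⁻¹ • (u k + w k) :=
        funext fun k => by rw [hu'def, hw'def]; simp [smul_add]
      rw [heq]
      simpa using hinv.smul hsum
    have hzero : uinf + winf = 0 :=
      tendsto_nhds_unique (huc.add hwc) (hsum0.comp hφmono.tendsto_atTop)
    -- uinf is a limiting normal of D at xstar
    have hu'fre : ∀ k, u' k ∈ frechetNormalCone D (y k) := fun k => by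
      rw [hu'def]
      refine frechet_smul (hufre k) (inv_nonneg.mpr (htpos k).le) ?_
      rw [inv_le_one_iff₀]
      right; exact ht1 k
    have huN : uinf ∈ limitingNormalCone D xstar :=
      ⟨fun j => y (φ j), fun j => u' (φ j), fun j => hyD _, fun j => hu'fre _,
        hy.comp hφmono.tendsto_atTop, huc⟩
    have hwN : winf ∈ (Lᗮ : Set V) := by
      refine hLclosed.mem_of_tendsto hwc (Filter.Eventually.of_forall fun j => ?_)
      rw [hw'def]
      exact Submodule.smul_mem _ _ (hwmem (φ j))
    -- constraint qualification forces uinf = winf = 0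
    have huCQ : uinf ∈ limitingNormalCone D xstar ∩ (-(Lᗮ : Set V)) := by
      refine ⟨huN, ?_⟩
      rw [Set.mem_neg]
      have : -uinf = winf := neg_eq_of_add_eq_zero_right hzero
      rwa [this]
    rw [hCQ] at huCQ
    have hu0 : uinf = 0 := huCQ
    have hw0 : winf = 0 := by
      have := hzero; rw [hu0, zero_add] at this; exact this
    -- but the norms of the scaled pair eventually sum to at least 1
    have hev : ∀ᶠ k in Filter.atTop, (1:ℝ) ≤ ‖u' k‖ + ‖w' k‖ := by
      have h2 : ∀ᶠ k in Filter.atTop, (2:ℝ) ≤ t k := ht.eventually_ge_atTop 2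
      refine h2.mono fun k hk => ?_
      have hm : (1:ℝ) ≤ max ‖u k‖ ‖w k‖ := by
        by_contra hcon
        push_neg at hcon
        have h3 : t k = 1 := max_eq_left (le_of_lt hcon)
        linarith
      have hmax : t k = max ‖u k‖ ‖w k‖ := max_eq_right hm
      rcases max_choice ‖u k‖ ‖w k‖ with hc | hc
      · have h1 : ‖u' k‖ = 1 := by
          rw [hu'norm k, ← hc, ← hmax, inv_mul_cancel₀ (htpos k).ne']
        rw [h1]
        have : (0:ℝ) ≤ ‖w' k‖ := norm_nonneg _
        linarith
      · have h1 : ‖w' k‖ = 1 := by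
          rw [hw'norm k, ← hc, ← hmax, inv_mul_cancel₀ (htpos k).ne']
        rw [h1]
        have : (0:ℝ) ≤ ‖u' k‖ := norm_nonneg _
        linarith
    have hevφ : ∀ᶠ j in Filter.atTop, (1:ℝ) ≤ ‖u' (φ j)‖ + ‖w' (φ j)‖ := by
      obtain ⟨N, hN⟩ := Filter.eventually_atTop.mp hev
      refine Filter.eventually_atTop.mpr ⟨N, fun j hj => hN (φ j) (le_trans hj (hφmono.le_apply))⟩
    have hlim : Filter.Tendsto (fun j => ‖u' (φ j)‖ + ‖w' (φ j)‖) Filter.atTop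
        (nhds (‖uinf‖ + ‖winf‖)) := huc.norm.add hwc.norm
    have : (1:ℝ) ≤ ‖uinf‖ + ‖winf‖ := ge_of_tendsto hlim hevφ
    rw [hu0, hw0, norm_zero] at this
    linarith
end

section
/- If a sequence (x^i) lies in a compact set, consecutive differences ‖x^{i+1} − x^i‖ → 0, and the set of accumulation points is finite, then the sequence converges. -/
open Filter Metric

/-- If a sequence eventually lies in a compact set and we restrict along a nontrivial
filter, we get a cluster point; here specialized to extract cluster points near subsets. -/
private lemma near_cluster_aux
    {V : Type*} [NormedAddCommGroup V]
    (x : ℕ → V) (K : Set V) (hK : IsCompact K) (hxK : ∀ i, x i ∈ K)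
    (δ : ℝ) (hδ : 0 < δ) :
    ∀ᶠ i in atTop, ∃ c ∈ {y : V | MapClusterPt y atTop x}, dist (x i) c < δ := by
  set C := {y : V | MapClusterPt y atTop x}
  by_contra h
  rw [not_eventually] at h
  set L : Filter ℕ := atTop ⊓ 𝓟 {i | ¬ ∃ c ∈ C, dist (x i) c < δ} with hL
  haveI : L.NeBot := by
    rw [hL, inf_principal_neBot_iff]
    intro s hs
    rcases (h.and_eventually hs).exists with ⟨i, hi1, hi2⟩
    exact ⟨i, hi2, hi1⟩
  have hmap : Filter.map x L ≤ 𝓟 K :=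
    le_principal_iff.mpr (mem_map.mpr (Eventually.of_forall fun i => hxK i))
  obtain ⟨y, hyK, hy⟩ := hK.exists_mapClusterPt hmap
  have hyC : y ∈ C := hy.mono inf_le_left
  -- y is in the closure of the set of points δ-far from C
  have hclos : y ∈ closure {v : V | ¬ ∃ c ∈ C, dist v c < δ} := by
    rw [mem_closure_iff_clusterPt]
    refine hy.clusterPt.mono (le_principal_iff.mpr ?_)
    rw [hL, mem_map]
    exact mem_inf_of_right (fun i hi => hi)
  rcases Metric.mem_closure_iff.mp hclos δ hδ with ⟨v, hv, hvd⟩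
  exact hv ⟨y, hyC, by rwa [dist_comm]⟩

/-- If a sequence in a finite-dimensional normed space lies in a compact set, its
consecutive differences tend to zero, and its set of accumulation points is
finite, then it converges. -/
theorem converges_of_finite_cluster_points
    {V : Type*} [NormedAddCommGroup V] [NormedSpace ℝ V] [FiniteDimensional ℝ V]
    (x : ℕ → V) (K : Set V) (hK : IsCompact K) (hxK : ∀ i, x i ∈ K)
    (hdiff : Filter.Tendsto (fun i => ‖x (i + 1) - x i‖) Filter.atTop (nhds 0))
    (hfin : {y : V | MapClusterPt y Filter.atTop x}.Finite) :
    ∃ l : V, Filter.Tendsto x Filter.atTop (nhds l) := by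
  set C := {y : V | MapClusterPt y Filter.atTop x} with hC
  -- C is nonempty
  have hmap : Filter.map x atTop ≤ 𝓟 K :=
    le_principal_iff.mpr (mem_map.mpr (Eventually.of_forall fun i => hxK i))
  obtain ⟨p, hpK, hp⟩ := hK.exists_mapClusterPt hmap
  have hpC : p ∈ C := hp
  -- p is isolated in C: there is ε > 0 with no other cluster point within ε of p
  obtain ⟨ε, hε, hball⟩ : ∃ ε > 0, ∀ q ∈ C, dist p q < ε → q = p := by
    have hDfin : (C \ {p}).Finite := hfin.diff
    have hDclosed : IsClosed (C \ {p}) := hDfin.isClosed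
    have hpD : p ∈ (C \ {p})ᶜ := by simp
    rcases Metric.isOpen_iff.mp hDclosed.isOpen_compl p hpD with ⟨ε, hε, hsub⟩
    refine ⟨ε, hε, fun q hq hdq => ?_⟩
    by_contra hne
    exact hsub (by rwa [mem_ball, dist_comm]) ⟨hq, hne⟩
  -- eventually, steps are small and the point is δ-close to C
  have key : ∀ δ > 0, δ ≤ ε / 3 → ∀ᶠ i in atTop, dist (x i) p < δ := by
    intro δ hδ hδε
    have hsteps : ∀ᶠ i in atTop, ‖x (i + 1) - x i‖ < ε / 3 := by
      have := hdiff.eventually (eventually_lt_nhds (by linarith : (0:ℝ) < ε / 3))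
      exact this
    have hnear := near_cluster_aux x K hK hxK δ hδ
    have hnear3 := near_cluster_aux x K hK hxK (ε / 3) (by linarith)
    rcases eventually_atTop.mp ((hsteps.and hnear3).and hnear) with ⟨N, hN⟩
    -- pick i0 ≥ N with x i0 close to p
    have hfreq : ∃ᶠ i in atTop, dist (x i) p < ε / 3 := by
      have := (mapClusterPt_iff_frequently.mp hp) (Metric.ball p (ε / 3))
        (Metric.ball_mem_nhds p (by linarith))
      exact this.mono fun i hi => by simpa [Metric.mem_ball] using hi
    rcases (frequently_atTop.mp hfreq) N with ⟨i0, hi0N, hi0⟩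
    -- by induction, x stays ε/3-close to p from i0 on
    have hstay : ∀ i, i0 ≤ i → dist (x i) p < ε / 3 := by
      intro i hi
      induction i, hi using Nat.le_induction with
      | base => exact hi0
      | succ i hi ih =>
        rcases hN (i + 1) (by omega) with ⟨⟨_, ⟨c, hcC, hc⟩⟩, _⟩
        have hstep : ‖x (i + 1) - x i‖ < ε / 3 := (hN i (by omega)).1.1
        have hpc : dist p c < ε := by
          have h1 : dist (x (i+1)) (x i) < ε / 3 := by
            rwa [dist_eq_norm]
          calc dist p c ≤ dist p (x i) + dist (x i) (x (i+1)) + dist (x (i+1)) c :=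
                dist_triangle4 p (x i) (x (i+1)) c
            _ < ε / 3 + ε / 3 + ε / 3 := by
                rw [dist_comm p (x i), dist_comm (x i) (x (i+1))]
                exact add_lt_add (add_lt_add ih h1) hc
            _ = ε := by ring
        have := hball c hcC hpc
        subst this
        exact lt_of_lt_of_le hc (by linarith)
    -- now conclude: eventually x i is δ-close to some c ∈ C, and that c must be p
    filter_upwards [eventually_ge_atTop i0, eventually_ge_atTop N] with i hi hiN
    rcases hN i hiN with ⟨_, ⟨c, hcC, hc⟩⟩
    have hpc : dist p c < ε := by
      calc dist p c ≤ dist p (x i) + dist (x i) c := dist_triangle p (x i) c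
        _ < ε / 3 + δ := by
            rw [dist_comm]
            exact add_lt_add (hstay i hi) hc
        _ < ε := by linarith
    have := hball c hcC hpc
    subst this
    exact hc
  refine ⟨p, Metric.tendsto_atTop.mpr fun δ hδ => ?_⟩
  have h := key (min δ (ε / 3)) (lt_min hδ (by linarith)) (min_le_right _ _)
  rcases eventually_atTop.mp h with ⟨N, hN⟩
  exact ⟨N, fun i hi => lt_of_lt_of_le (hN i hi) (min_le_left _ _)⟩
end
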